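/- Let G be a P5-free graph in which no longest cycle is dominating, let C be a longest cycle of G (with orientation) minimizing first μ(C) and then ω(C), and let H be a component of G − C with |H| = μ(C) ≥ 2. If v1 and v2 are distinct vertices on C each with a neighbor in H and |N_G(v1; H) ∪ N_G(v2; H)| ≥ 2, then v1⁻²v2⁻² is not an edge of G. -/

import Mathlib

open SimpleGraph

variable {V : Type*} [Fintype V] [DecidableEq V]

/-- `p 0, p 1, ..., p (n-1)` is a path of order `n` in `G`. -/
def IsPathOn (G : SimpleGraph V) (n : ℕ) (p : ℕ → V) : Prop :=
  (∀ i j, i < n → j < n → p i = p j → i = j) ∧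
  (∀ i, i + 1 < n → G.Adj (p i) (p (i + 1)))

/-- An induced path of order `n` in `G`. -/
def IsInducedPathOn (G : SimpleGraph V) (n : ℕ) (p : ℕ → V) : Prop :=
  IsPathOn G n p ∧ ∀ i j, i < n → j < n → G.Adj (p i) (p j) → (i + 1 = j ∨ j + 1 = i)

/-- `G` contains no induced path on 5 vertices. -/
def P5Free (G : SimpleGraph V) : Prop := ¬ ∃ p : ℕ → V, IsInducedPathOn G 5 p

/-- `G` contains no induced `K₄` minus an edge. -/
def K4mFree (G : SimpleGraph V) : Prop :=
  ¬ ∃ a b c d : V, a ≠ b ∧ a ≠ c ∧ a ≠ d ∧ b ≠ c ∧ b ≠ d ∧ c ≠ d ∧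
    G.Adj a b ∧ G.Adj a c ∧ G.Adj a d ∧ G.Adj b c ∧ G.Adj b d ∧ ¬ G.Adj c d

/-- `G` contains no induced `W*` (two triangles `abc`, `def` joined by the edge `cd`). -/
def WStarFree (G : SimpleGraph V) : Prop :=
  ¬ ∃ a b c d e f : V, List.Nodup [a, b, c, d, e, f] ∧
    G.Adj a b ∧ G.Adj b c ∧ G.Adj a c ∧ G.Adj d e ∧ G.Adj e f ∧ G.Adj d f ∧ G.Adj c d ∧
    ¬ G.Adj a d ∧ ¬ G.Adj a e ∧ ¬ G.Adj a f ∧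
    ¬ G.Adj b d ∧ ¬ G.Adj b e ∧ ¬ G.Adj b f ∧ ¬ G.Adj c e ∧ ¬ G.Adj c f

/-- `G` contains no induced paw (triangle `abc` with pendant edge `cd`). -/
def Z1Free (G : SimpleGraph V) : Prop :=
  ¬ ∃ a b c d : V, List.Nodup [a, b, c, d] ∧
    G.Adj a b ∧ G.Adj b c ∧ G.Adj a c ∧ G.Adj c d ∧ ¬ G.Adj a d ∧ ¬ G.Adj b d

/-- An (oriented) cycle of length `n` in `G`, as an injective map `ZMod n → V`
with consecutive vertices adjacent. -/
def IsCycleOn (G : SimpleGraph V) (n : ℕ) (c : ZMod n → V) : Prop :=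
  3 ≤ n ∧ Function.Injective c ∧ ∀ i, G.Adj (c i) (c (i + 1))

/-- A longest cycle of `G`. -/
def IsLongestCycle (G : SimpleGraph V) (n : ℕ) (c : ZMod n → V) : Prop :=
  IsCycleOn G n c ∧ ∀ (m : ℕ) (d : ZMod m → V), IsCycleOn G m d → m ≤ n

/-- A dominating cycle: every edge of `G` is incident with a vertex of the cycle. -/
def DominatingCycle (G : SimpleGraph V) (n : ℕ) (c : ZMod n → V) : Prop :=
  IsCycleOn G n c ∧ ∀ u v : V, G.Adj u v → u ∈ Set.range c ∨ v ∈ Set.range c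

/-- `H` is (the vertex set of) a connected component of `G - R`. -/
def IsCompOff (G : SimpleGraph V) (R : Set V) (H : Set V) : Prop :=
  H.Nonempty ∧ Disjoint H R ∧ (G.induce H).Connected ∧
  ∀ u v : V, u ∈ H → v ∉ H → v ∉ R → ¬ G.Adj u v

/-- `μ`: the maximum order of a component of `G - R`. -/
noncomputable def muC (G : SimpleGraph V) (R : Set V) : ℕ :=
  sSup {k | ∃ H : Set V, IsCompOff G R H ∧ H.ncard = k}

/-- `ω`: the number of components of `G - R` of maximum order. -/
noncomputable def omegaC (G : SimpleGraph V) (R : Set V) : ℕ :=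
  {H : Set V | IsCompOff G R H ∧ H.ncard = muC G R}.ncard

/-- `G` is 2-connected: at least 3 vertices, connected, and removing any
vertex leaves it connected. -/
def TwoConnected (G : SimpleGraph V) : Prop :=
  3 ≤ Fintype.card V ∧ G.Connected ∧
  ∀ v : V, (G.induce ({v}ᶜ : Set V)).Connected

/-- The set of indices of `ZMod n` encountered going from `s` to `t` in the
positive direction (including both `s` and `t`). -/
def seg (n : ℕ) (s t : ZMod n) : Set (ZMod n) :=
  {x | ∃ k : ℕ, x = s + (k : ZMod n) ∧ ∀ m : ℕ, m < k → s + (m : ZMod n) ≠ t}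

/-- `G` is complete multipartite: the vertices partition into classes of an
equivalence relation which are independent, with all edges between classes. -/
def CompleteMultipartite (G : SimpleGraph V) : Prop :=
  ∃ r : V → V → Prop, Equivalence r ∧ ∀ u v : V, u ≠ v → (G.Adj u v ↔ ¬ r u v)

/-- A `C`-path (for `R = V(C)`): a path of order at least 2 whose ends lie in
`R` and whose internal vertices avoid `R`. -/
def IsCPath (G : SimpleGraph V) (R : Set V) (m : ℕ) (p : ℕ → V) : Prop :=
  2 ≤ m ∧ IsPathOn G m p ∧ p 0 ∈ R ∧ p (m - 1) ∈ R ∧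
  ∀ i, 0 < i → i < m - 1 → p i ∉ R

set_option linter.unusedSectionVars false
section helpers
variable {V : Type*} [Fintype V] [DecidableEq V]

lemma exists_cycleOn_of_list (G : SimpleGraph V) (L : List V) (h3 : 3 ≤ L.length)
    (nd : L.Nodup) (ch : L.Chain' G.Adj)
    (cl : G.Adj (L.getLast (by rintro rfl; simp at h3)) (L.head (by rintro rfl; simp at h3))) :
    ∃ f : ZMod L.length → V, IsCycleOn G L.length f ∧ Set.range f = {x | x ∈ L} := by
  have hne : L ≠ [] := by rintro rfl; simp at h3
  haveI : NeZero L.length := ⟨by omega⟩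
  refine ⟨fun i => L.get ⟨i.val, i.val_lt⟩, ⟨h3, ?_, ?_⟩, ?_⟩
  · intro i j he
    have := (List.Nodup.get_inj_iff nd).mp he
    have h1 : i.val = j.val := congrArg Fin.val this
    exact ZMod.val_injective _ h1
  · intro i
    have hv1 : (1 : ZMod L.length).val = 1 := by
      haveI : Fact (1 < L.length) := ⟨by omega⟩
      exact ZMod.val_one L.length
    have hadd : (i + 1).val = (i.val + 1) % L.length := by
      rw [ZMod.val_add, hv1]
    by_cases hlt : i.val + 1 < L.length
    · have : (i+1).val = i.val + 1 := by rw [hadd, Nat.mod_eq_of_lt hlt]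
      have hch := List.isChain_iff_getElem.mp ch i.val (by omega)
      convert hch using 2
      show L.get ⟨(i+1).val, (i+1).val_lt⟩ = L.get ⟨i.val+1, hlt⟩
      exact congrArg L.get (Fin.ext this)
      rfl
    · have hi : i.val = L.length - 1 := by have := i.val_lt; omega
      have h0 : (i+1).val = 0 := by rw [hadd, hi]; simp [Nat.sub_add_cancel (by omega : 1 ≤ L.length)]
      have hlast : L.get ⟨i.val, i.val_lt⟩ = L.getLast hne := by
        rw [List.getLast_eq_getElem]; simp [hi, List.get_eq_getElem]
      have hhead : L.get ⟨(i+1).val, (i+1).val_lt⟩ = L.head hne := by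
        rw [List.head_eq_getElem]; simp [h0, List.get_eq_getElem]
      show G.Adj (L.get ⟨i.val, i.val_lt⟩) (L.get ⟨(i+1).val, (i+1).val_lt⟩)
      rw [hlast, hhead]; exact cl
  · ext x
    simp only [Set.mem_range, Set.mem_setOf_eq]
    constructor
    · rintro ⟨i, rfl⟩; exact List.get_mem L ⟨i.val, i.val_lt⟩
    · intro hx
      obtain ⟨⟨k, hk⟩, rfl⟩ := List.mem_iff_get.mp hx
      refine ⟨(k : ZMod L.length), ?_⟩
      have : ((k : ZMod L.length)).val = k := ZMod.val_cast_of_lt hk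
      simp only [List.get_eq_getElem]
      congr 1

end helpers
set_option linter.unusedSectionVars false
section arcs

variable {V : Type*} [Fintype V] [DecidableEq V] {G : SimpleGraph V}
variable {n : ℕ} {c : ZMod n → V}

/-- arc of the cycle `c`: `c (β + a), c (β + a + 1), ..., c (β + a + k - 1)`. -/
def oarc (c : ZMod n → V) (β : ZMod n) (a k : ℕ) : List V :=
  (List.range k).map fun t => c (β + ((a + t : ℕ) : ZMod n))

lemma oarc_length (β : ZMod n) (a k : ℕ) : (oarc c β a k).length = k := by simp [oarc]

lemma mem_oarc {x : V} {β : ZMod n} {a k : ℕ} :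
    x ∈ oarc c β a k ↔ ∃ s : ℕ, a ≤ s ∧ s < a + k ∧ x = c (β + (s : ℕ)) := by
  simp only [oarc, List.mem_map, List.mem_range]
  constructor
  · rintro ⟨t, ht, rfl⟩; exact ⟨a + t, by omega, by omega, rfl⟩
  · rintro ⟨s, h1, h2, rfl⟩; exact ⟨s - a, by omega, by rw [Nat.add_sub_cancel' h1]⟩

lemma oarc_subset_range (β : ZMod n) (a k : ℕ) : ∀ x ∈ oarc c β a k, x ∈ Set.range c := by
  intro x hx; obtain ⟨s, _, _, rfl⟩ := mem_oarc.mp hx; exact ⟨_, rfl⟩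

lemma inj_off (hinj : Function.Injective c) {β : ZMod n} {s t : ℕ} (hs : s < n) (ht : t < n)
    (h : c (β + (s:ℕ)) = c (β + (t:ℕ))) : s = t := by
  have := hinj h
  have h2 : ((s:ℕ) : ZMod n) = t := by
    have := add_left_cancel this
    exact_mod_cast this
  have := congrArg ZMod.val h2
  rwa [ZMod.val_cast_of_lt hs, ZMod.val_cast_of_lt ht] at this

lemma oarc_nodup (hinj : Function.Injective c) (β : ZMod n) {a k : ℕ} (h : a + k ≤ n) :
    (oarc c β a k).Nodup := by
  refine List.Nodup.map_on ?_ List.nodup_range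
  intro s hs t ht he
  simp only [List.mem_range] at hs ht
  have := inj_off hinj (β := β) (by omega : a + s < n) (by omega : a + t < n) he
  omega

lemma oarc_chain' (hadj : ∀ i, G.Adj (c i) (c (i + 1))) (β : ZMod n) (a k : ℕ) :
    (oarc c β a k).Chain' G.Adj := by
  rw [oarc, List.Chain', List.isChain_map, List.isChain_iff_getElem]
  intro t ht
  simp only [List.get_eq_getElem, List.getElem_range]
  have : ((a + (t+1) : ℕ) : ZMod n) = ((a + t : ℕ) : ZMod n) + 1 := by push_cast; ring
  rw [this, ← add_assoc]
  exact hadj _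

lemma oarc_head {β : ZMod n} {a k : ℕ} (h : 0 < k) :
    (oarc c β a k).head? = some (c (β + (a : ℕ))) := by
  cases k with
  | zero => omega
  | succ k => simp [oarc, List.range_succ_eq_map]

lemma oarc_getLast {β : ZMod n} {a k : ℕ} (h : 0 < k) :
    (oarc c β a k).getLast? = some (c (β + ((a + k - 1 : ℕ)))) := by
  cases k with
  | zero => omega
  | succ k =>
    simp only [oarc, List.range_succ, List.map_append, List.map_cons, List.map_nil]
    rw [List.getLast?_append_cons]
    have h2 : a + (k+1) - 1 = a + k := by omega
    rw [h2]
    rfl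

end arcs
set_option linter.unusedSectionVars false
set_option maxHeartbeats 1000000
section shortcut
variable {V : Type*} [Fintype V] [DecidableEq V] {G : SimpleGraph V}
variable {n : ℕ} {c : ZMod n → V}

lemma natCast_val_eq [NeZero n] (a : ZMod n) : ((a.val : ℕ) : ZMod n) = a :=
  (ZMod.natCast_val a).trans (by simp)

lemma shortcut (hc : IsLongestCycle G n c) (j1 j2 : ZMod n) (P : List V)
    (hP : P ≠ []) (nd : P.Nodup) (hoff : ∀ x ∈ P, x ∉ Set.range c)
    (ch : P.Chain' G.Adj) (h1 : G.Adj (c j1) (P.head hP)) (h2 : G.Adj (P.getLast hP) (c j2))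
    (hlen : n < (j1 - j2).val + 1 + P.length) : False := by
  have h3n : 3 ≤ n := hc.1.1
  haveI : NeZero n := ⟨by omega⟩
  have hinj := hc.1.2.1
  have hadj := hc.1.2.2
  set k := (j1 - j2).val + 1 with hk
  have hkn : k ≤ n := by have := (j1-j2).val_lt; omega
  set A := oarc c j2 0 k with hA
  have hAne : A ≠ [] := by
    intro h; have := oarc_length (c := c) j2 0 k; rw [hA] at h; rw [h] at this; simp at this
  set L := P ++ A with hL
  have hLlen : L.length = P.length + k := by simp [hL, hA, oarc_length]
  have hLne : L ≠ [] := by simp [hL, hP]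
  have hlast : L.getLast hLne = c j1 := by
    have h0 : A.getLast? = some (c (j2 + ((0 + k - 1 : ℕ)))) := oarc_getLast (by omega)
    have h0' : L.getLast? = some (c (j2 + ((0 + k - 1 : ℕ)))) := by
      rw [hL, List.getLast?_append, h0]; rfl
    have h1' : (0 + k - 1 : ℕ) = (j1 - j2).val := by omega
    rw [List.getLast?_eq_getLast hLne] at h0'
    have := Option.some_injective _ h0'
    rw [this, h1', natCast_val_eq, add_sub_cancel]
  have hhead : L.head hLne = P.head hP := List.head_append_of_ne_nil hP
  have hnd : L.Nodup := by
    rw [hL, List.nodup_append]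
    refine ⟨nd, oarc_nodup hinj j2 (by omega), ?_⟩
    intro x hx y hx' hxy; subst hxy
    exact hoff x hx (oarc_subset_range (c := c) j2 0 k x hx')
  have hch : L.Chain' G.Adj := by
    rw [hL, List.Chain', List.isChain_append]
    refine ⟨ch, oarc_chain' hadj j2 0 k, ?_⟩
    intro x hx y hy
    rw [List.getLast?_eq_getLast hP] at hx
    rw [hA, oarc_head (by omega : 0 < k)] at hy
    obtain rfl := Option.some_injective _ hx.symm
    obtain rfl := Option.some_injective _ hy.symm
    simpa using h2
  have h3L : 3 ≤ L.length := by omega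
  obtain ⟨f, hf, -⟩ := exists_cycleOn_of_list G L h3L hnd hch (by rw [hlast, hhead]; exact h1)
  have := hc.2 L.length f hf
  omega

end shortcut
set_option linter.unusedSectionVars false
section master
variable {V : Type*} [Fintype V] [DecidableEq V] {G : SimpleGraph V}
variable {n : ℕ} {c : ZMod n → V}

lemma chain'_reverse_adj {l : List V} (h : l.Chain' G.Adj) : l.reverse.Chain' G.Adj := by
  rw [List.Chain', List.isChain_reverse]
  exact h.imp (fun a b hab => hab.symm)

lemma masterCycle (hinj : Function.Injective c) (hadj : ∀ i, G.Adj (c i) (c (i+1)))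
    (β : ZMod n) (P W : List V) (d k1 k2 : ℕ) (hP : P ≠ [])
    (hk1 : 1 ≤ k1) (hk2 : 1 ≤ k2) (hdk : k2 ≤ d) (hkn : d + k1 ≤ n)
    (hPnd : P.Nodup) (hPoff : ∀ x ∈ P, x ∉ Set.range c)
    (hW : ∀ w ∈ W, w ∉ Set.range c ∧ w ∉ P) (hWnd : W.Nodup)
    (a1 : G.Adj (c β) (P.head hP)) (a2 : P.Chain' G.Adj)
    (a3 : G.Adj (P.getLast hP) (c (β + (d:ℕ))))
    (hj : List.Chain' G.Adj
      (c (β + ((d + k1 - 1 : ℕ))) :: (W ++ [c (β + ((k2 - 1 : ℕ)))]))) :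
    ∃ (m : ℕ) (f : ZMod m → V), m = P.length + k1 + W.length + k2 ∧ IsCycleOn G m f ∧
      Set.range f =
        {x | x ∈ (P ++ (oarc c β d k1 ++ (W ++ (oarc c β 0 k2).reverse)))} := by
  set A := oarc c β d k1 with hA
  set B := oarc c β 0 k2 with hB
  set L : List V := P ++ (A ++ (W ++ B.reverse)) with hL
  have hAlen : A.length = k1 := oarc_length β d k1
  have hBlen : B.length = k2 := oarc_length β 0 k2
  have hLlen : L.length = P.length + k1 + W.length + k2 := by simp [hL, hAlen, hBlen]; omega
  have hAlast : A.getLast? = some (c (β + ((d + k1 - 1 : ℕ)))) := oarc_getLast (by omega)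
  have hAhead : A.head? = some (c (β + (d : ℕ))) := by
    exact oarc_head (by omega)
  have hBlast : B.getLast? = some (c (β + ((k2 - 1 : ℕ)))) := by
    have := oarc_getLast (c := c) (β := β) (a := 0) (k := k2) (by omega)
    rwa [Nat.zero_add] at this
  have hBhead : B.head? = some (c β) := by
    have := oarc_head (c := c) (β := β) (a := 0) (k := k2) (by omega)
    rwa [Nat.cast_zero, add_zero] at this
  have hBrevhead : B.reverse.head? = some (c (β + ((k2 - 1 : ℕ)))) := by
    rw [List.head?_reverse]; exact hBlast
  have hBrevlast : B.reverse.getLast? = some (c β) := by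
    rw [List.getLast?_reverse]; exact hBhead
  -- nodup
  have hAsub : ∀ x ∈ A, x ∈ Set.range c := oarc_subset_range β d k1
  have hBrevsub : ∀ x ∈ B.reverse, x ∈ Set.range c := by
    intro x hx; exact oarc_subset_range β 0 k2 x (List.mem_reverse.mp hx)
  have hAB : ∀ x ∈ A, x ∉ B.reverse := by
    intro x hxA hxB
    obtain ⟨s, hs1, hs2, rfl⟩ := mem_oarc.mp hxA
    obtain ⟨t, ht1, ht2, he⟩ := mem_oarc.mp (List.mem_reverse.mp hxB)
    have := inj_off hinj (by omega : s < n) (by omega : t < n) he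
    omega
  have hnd : L.Nodup := by
    rw [hL, List.nodup_append]
    refine ⟨hPnd, ?_, ?_⟩
    swap
    · intro x hxP y hx' hxy; subst hxy
      simp only [List.mem_append] at hx'
      rcases hx' with (h | h | h)
      · exact hPoff x hxP (hAsub _ h)
      · exact (hW _ h).2 hxP
      · exact hPoff x hxP (hBrevsub _ h)
    · rw [List.nodup_append]
      refine ⟨oarc_nodup hinj β (by omega), ?_, ?_⟩
      · rw [List.nodup_append]
        refine ⟨hWnd, List.nodup_reverse.mpr (oarc_nodup hinj β (by omega)), ?_⟩
        intro x hxW y hxB hxy; subst hxy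
        exact ((hW x hxW).1) (hBrevsub _ hxB)
      · intro x hxA y hx' hxy; subst hxy
        rcases List.mem_append.mp hx' with hxW | hxB
        · exact ((hW x hxW).1) (hAsub _ hxA)
        · exact hAB x hxA hxB
  -- chain
  have hjA : ∀ y ∈ (W ++ [c (β + ((k2 - 1 : ℕ)))]).head?, G.Adj (c (β + ((d + k1 - 1 : ℕ)))) y :=
    (List.isChain_cons.mp hj).1
  have hjWB := (List.isChain_cons.mp hj).2
  have hWBhead : (W ++ B.reverse).head? = (W ++ [c (β + ((k2 - 1 : ℕ)))]).head? := by
    cases W with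
    | nil => simpa using hBrevhead
    | cons a l => simp
  have hch : L.Chain' G.Adj := by
    rw [hL, List.Chain', List.isChain_append]
    refine ⟨a2, ?_, ?_⟩
    swap
    · intro x hxl y hy
      rw [List.getLast?_eq_getLast hP] at hxl
      obtain rfl := Option.some_injective _ hxl.symm
      have hAne : A ≠ [] := by intro h; have := hAlen; rw [h] at this; simp at this; omega
      have h' : (A ++ (W ++ B.reverse)).head? = some (c (β + (d:ℕ))) := by
        cases hA' : A with
        | nil => exact absurd hA' hAne
        | cons a as =>
            rw [hA'] at hAhead
            simp only [List.head?_cons, Option.some_inj] at hAhead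
            simp [List.cons_append, List.head?_cons, hAhead]
      rw [h'] at hy
      obtain rfl := Option.some_injective _ hy.symm
      exact a3
    · rw [List.isChain_append]
      refine ⟨oarc_chain' hadj β d k1, ?_, ?_⟩
      · rw [List.isChain_append]
        refine ⟨(List.isChain_append.mp hjWB).1, chain'_reverse_adj (oarc_chain' hadj β 0 k2), ?_⟩
        intro x hx y hy
        rw [hBrevhead] at hy
        obtain rfl := Option.some_injective _ hy.symm
        exact (List.isChain_append.mp hjWB).2.2 x hx _ (by simp)
      · intro x hx y hy
        rw [hAlast] at hx
        obtain rfl := Option.some_injective _ hx.symm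
        rw [hWBhead] at hy
        exact hjA y hy
  have hLne : L ≠ [] := by simp [hL, hP]
  have hlast? : L.getLast? = some (c β) := by
    show (P ++ (A ++ (W ++ B.reverse))).getLast? = _
    simp only [List.getLast?_append, hBrevlast]
    rfl
  have hlast : L.getLast hLne = c β := by
    rw [List.getLast?_eq_getLast hLne] at hlast?
    exact Option.some_injective _ hlast?
  have hhead : L.head hLne = P.head hP := List.head_append_of_ne_nil hP
  have hPlen : 1 ≤ P.length := by cases P with
    | nil => exact absurd rfl hP
    | cons a l => simp
  have h3L : 3 ≤ L.length := by omega
  obtain ⟨f, hf, hr⟩ := exists_cycleOn_of_list G L h3L hnd hch (by rw [hlast, hhead]; exact a1)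
  exact ⟨L.length, f, hLlen, hf, hr⟩
end master
section paths
open SimpleGraph
variable {V : Type*} [Fintype V] [DecidableEq V] {G : SimpleGraph V}

lemma exists_H_path {H : Set V} (hconn : (G.induce H).Connected) {x y : V}
    (hx : x ∈ H) (hy : y ∈ H) :
    ∃ P : List V, ∃ hP : P ≠ [], P.Nodup ∧ (∀ v ∈ P, v ∈ H) ∧ P.Chain' G.Adj ∧
      P.head hP = x ∧ P.getLast hP = y := by
  obtain ⟨w⟩ := hconn.1 ⟨x, hx⟩ ⟨y, hy⟩
  set p := w.toPath.1 with hp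
  refine ⟨p.support.map Subtype.val, ?_, ?_, ?_, ?_, ?_, ?_⟩
  · intro h
    have := congrArg List.length h
    simp only [List.length_map, List.length_nil] at this
    exact p.support_ne_nil (List.eq_nil_of_length_eq_zero this)
  · exact (w.toPath.2.support_nodup).map Subtype.val_injective
  · intro v hv
    simp only [List.mem_map] at hv
    obtain ⟨⟨v', hv'⟩, _, rfl⟩ := hv
    exact hv'
  · have h1 := p.isChain_adj_support
    rw [List.Chain', List.isChain_map]
    exact h1.imp (fun a b hab => by simpa using hab)
  · have h0 : p.support.head p.support_ne_nil = ⟨x, hx⟩ := by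
      cases hq : p with
      | nil => simp [SimpleGraph.Walk.support]
      | cons h q => simp [SimpleGraph.Walk.support]
    rw [List.head_map]
    rw [h0]
  · have h0 : p.support.getLast p.support_ne_nil = ⟨y, hy⟩ := SimpleGraph.Walk.getLast_support p
    rw [List.getLast_map]
    rw [h0]

lemma reach_closed {S : Set V} (hconn : (G.induce S).Connected) (P : V → Prop)
    {u : V} (hu : u ∈ S) (hPu : P u)
    (hstep : ∀ a b, a ∈ S → b ∈ S → P a → G.Adj a b → P b) :
    ∀ v ∈ S, P v := by
  suffices h : ∀ (a b : ↥S) (w : (G.induce S).Walk a b), P a.1 → P b.1 by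
    intro v hv
    obtain ⟨w⟩ := hconn.1 ⟨u, hu⟩ ⟨v, hv⟩
    exact h _ _ w hPu
  intro a b w
  induction w with
  | nil => exact id
  | @cons a' b' c' hab q ih =>
    intro hPa
    exact ih (hstep a'.1 b'.1 a'.2 b'.2 hPa (by simpa using hab))
end paths
section key
open SimpleGraph
set_option linter.unusedSectionVars false
variable {V : Type*} [Fintype V] [DecidableEq V]

lemma val_neg_one' {n : ℕ} (h : 1 ≤ n) : ((-1 : ZMod n)).val = n - 1 := by
  haveI : NeZero n := ⟨by omega⟩
  have h1 : (-1 : ZMod n) = ((n-1 : ℕ) : ZMod n) := by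
    have h2 : ((n-1 : ℕ) : ZMod n) = (n : ZMod n) - 1 := by
      push_cast [Nat.cast_sub h]; ring
    rw [h2, ZMod.natCast_self]; ring
  rw [h1, ZMod.val_cast_of_lt (by omega)]

lemma key (G : SimpleGraph V) {n : ℕ} {c : ZMod n → V}
    (hc : IsLongestCycle G n c)
    {H : Set V} (hH : IsCompOff G (Set.range c) H)
    (i1 i2 : ZMod n) (x1 x2 : V) (hx1 : x1 ∈ H) (hx2 : x2 ∈ H)
    (ha1 : G.Adj (c i1) x1) (ha2 : G.Adj (c i2) x2)
    (hx12 : x1 ≠ x2) (hxx : G.Adj x1 x2)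
    (hd3 : 3 ≤ (i2 - i1).val) (hd3' : (i2 - i1).val ≤ n - 3) :
    (∀ h ∈ H, ¬ G.Adj (c (i1 - 1)) h) ∧
    ¬ G.Adj (c (i1 - 1)) (c (i2 - 2)) ∧
    ¬ G.Adj (c (i1 - 1)) (c (i2 - 1)) ∧
    (∀ w, w ∉ Set.range c → G.Adj w (c (i1 - 1)) →
      ¬ G.Adj w (c i1) ∧ ¬ G.Adj w (c (i1 - 2)) ∧
      ¬ G.Adj w (c (i2 - 2)) ∧ ¬ G.Adj w (c (i2 - 1))) := by
  have h3n : 3 ≤ n := hc.1.1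
  haveI : NeZero n := ⟨by omega⟩
  have hinj := hc.1.2.1
  have hadj := hc.1.2.2
  set d := (i2 - i1).val with hdd
  have hdn : d < n := (i2 - i1).val_lt
  have hn6 : 6 ≤ n := by omega
  have hoffH : ∀ x ∈ H, x ∉ Set.range c := fun x hx => Set.disjoint_left.mp hH.2.1 hx
  have hx1c : x1 ∉ Set.range c := hoffH x1 hx1
  have hx2c : x2 ∉ Set.range c := hoffH x2 hx2
  -- index conversions
  have e5 : i2 = i1 + ((d : ℕ) : ZMod n) := by
    rw [hdd, natCast_val_eq]; ring
  have e1 : i1 - 1 = i1 + ((n - 1 : ℕ) : ZMod n) := by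
    have : ((n-1 : ℕ) : ZMod n) = -1 := by
      push_cast [Nat.cast_sub (by omega : 1 ≤ n)]
      rw [ZMod.natCast_self]; ring
    rw [this]; ring
  have e2 : i1 - 2 = i1 + ((n - 2 : ℕ) : ZMod n) := by
    have : ((n-2 : ℕ) : ZMod n) = -2 := by
      push_cast [Nat.cast_sub (by omega : 2 ≤ n)]
      rw [ZMod.natCast_self]; ring
    rw [this]; ring
  have e3 : i2 - 1 = i1 + ((d - 1 : ℕ) : ZMod n) := by
    have : ((d-1 : ℕ) : ZMod n) = ((d : ℕ) : ZMod n) - 1 := by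
      push_cast [Nat.cast_sub (by omega : 1 ≤ d)]; ring
    rw [this, e5]; ring
  have e4 : i2 - 2 = i1 + ((d - 2 : ℕ) : ZMod n) := by
    have : ((d-2 : ℕ) : ZMod n) = ((d : ℕ) : ZMod n) - 2 := by
      push_cast [Nat.cast_sub (by omega : 2 ≤ d)]; ring
    rw [this, e5]; ring
  have hneg1 : ∀ j : ZMod n, (j - 1 - j).val = n - 1 := by
    intro j
    have : j - 1 - j = -1 := by ring
    rw [this, val_neg_one' (by omega)]
  -- F1 for i1
  have F1 : ∀ h ∈ H, ¬ G.Adj (c (i1 - 1)) h := by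
    intro h hh hadj'
    obtain ⟨P, hP, Pnd, PH, Pch, Phead, Plast⟩ := exists_H_path hH.2.2.1 hh hx1
    refine shortcut hc (i1 - 1) i1 P hP Pnd (fun x hx => hoffH x (PH x hx)) Pch
      (by rw [Phead]; exact hadj') (by rw [Plast]; exact ha1.symm) ?_
    rw [hneg1 i1]
    have : 1 ≤ P.length := by
      cases P with
      | nil => exact absurd rfl hP
      | cons a l => simp
    omega
  -- w-forcings helper facts
  have hstep1 : ∀ w, w ∉ Set.range c → G.Adj w (c (i1 - 1)) → w ∉ H := by
    intro w hwc hw1 hwH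
    exact F1 w hwH hw1.symm
  -- master instances
  have master_inst : ∀ (W : List V) (k2 : ℕ), 1 ≤ k2 → k2 ≤ d →
      (∀ w ∈ W, w ∉ Set.range c ∧ w ∉ [x1, x2]) → W.Nodup →
      List.Chain' G.Adj (c (i1 - 1) :: (W ++ [c (i1 + ((k2 - 1 : ℕ) : ZMod n))])) →
      2 + (n - d) + W.length + k2 ≤ n := by
    intro W k2 hk2 hk2d hW hWnd hj
    have hj' : List.Chain' G.Adj
        (c (i1 + ((d + (n - d) - 1 : ℕ) : ZMod n)) :: (W ++ [c (i1 + ((k2 - 1 : ℕ) : ZMod n))])) := by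
      have : (d + (n - d) - 1 : ℕ) = n - 1 := by omega
      rw [this, ← e1]; exact hj
    have hLast2 : G.Adj (([x1, x2].getLast (by simp)) : V) (c (i1 + ((d : ℕ) : ZMod n))) := by
      show G.Adj x2 _
      rw [← e5]; exact ha2.symm
    obtain ⟨m, f, hm, hcyc, -⟩ := masterCycle hinj hadj i1 [x1, x2] W d (n - d) k2
      (by simp) (by omega) hk2 hk2d (by omega) (by simp [hx12])
      (by intro x hx; simp only [List.mem_cons, List.mem_singleton] at hx
          rcases hx with rfl | rfl | h; exacts [hx1c, hx2c, absurd h List.not_mem_nil])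
      hW hWnd (by simpa using ha1) (List.isChain_pair.mpr hxx) hLast2 hj'
    have := hc.2 m f hcyc
    simp only [List.length_cons, List.length_nil] at hm
    omega
  refine ⟨F1, ?_, ?_, ?_⟩
  · -- ¬ Adj v1-1 v2-2
    intro hadj'
    have := master_inst [] (d - 1) (by omega) (by omega) (by simp) (by simp) ?_
    · omega
    · have : (d - 1 - 1 : ℕ) = d - 2 := by omega
      rw [this, List.nil_append, ← e4]
      exact List.isChain_pair.mpr hadj'
  · -- ¬ Adj v1-1 v2-1
    intro hadj'
    have := master_inst [] d (by omega) (le_refl d) (by simp) (by simp) ?_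
    · omega
    · rw [List.nil_append, ← e3]
      exact List.isChain_pair.mpr hadj'
  · -- w-forcings
    intro w hwc hw1
    have hwH : w ∉ H := hstep1 w hwc hw1
    have hwx1 : w ≠ x1 := fun h => hwH (h ▸ hx1)
    have hwx2 : w ≠ x2 := fun h => hwH (h ▸ hx2)
    refine ⟨?_, ?_, ?_, ?_⟩
    · intro h
      refine shortcut hc (i1 - 1) i1 [w] (by simp) (by simp) (by simpa using hwc)
        (List.isChain_singleton w) (by simpa using hw1.symm) (by simpa using h) ?_
      rw [hneg1 i1]; simp; omega
    · intro h
      have he12 : i1 - 2 - (i1 - 1) = -1 := by ring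
      refine shortcut hc (i1 - 2) (i1 - 1) [w] (by simp) (by simp) (by simpa using hwc)
        (List.isChain_singleton w) (by simpa using h.symm) (by simpa using hw1) ?_
      rw [he12, val_neg_one' (by omega)]; simp; omega
    · intro h
      have := master_inst [w] (d - 1) (by omega) (by omega)
        (by intro w' hw'; simp at hw'; subst hw'; exact ⟨hwc, by simp [hwx1, hwx2]⟩) (by simp) ?_
      · omega
      · have h2 : (d - 1 - 1 : ℕ) = d - 2 := by omega
        rw [h2, ← e4]
        simp only [List.cons_append, List.nil_append]
        exact List.isChain_cons_cons.mpr ⟨hw1.symm, List.isChain_pair.mpr h⟩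
    · intro h
      have := master_inst [w] d (by omega) (le_refl d)
        (by intro w' hw'; simp at hw'; subst hw'; exact ⟨hwc, by simp [hwx1, hwx2]⟩) (by simp) ?_
      · omega
      · rw [← e3]
        simp only [List.cons_append, List.nil_append]
        exact List.isChain_cons_cons.mpr ⟨hw1.symm, List.isChain_pair.mpr h⟩
end key
section main
open SimpleGraph
set_option linter.unusedSectionVars false
set_option maxHeartbeats 2000000

theorem stmt_14 (G : SimpleGraph V) (hG : P5Free G)
    (hnd : ∀ (m : ℕ) (d : ZMod m → V), IsLongestCycle G m d → ¬ DominatingCycle G m d)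
    (n : ℕ) (c : ZMod n → V) (hc : IsLongestCycle G n c)
    (hmin : ∀ (m : ℕ) (d : ZMod m → V), IsLongestCycle G m d →
      muC G (Set.range c) ≤ muC G (Set.range d) ∧
      (muC G (Set.range c) = muC G (Set.range d) →
        omegaC G (Set.range c) ≤ omegaC G (Set.range d)))
    (H : Set V) (hH : IsCompOff G (Set.range c) H)
    (hHmu : H.ncard = muC G (Set.range c)) (hH2 : 2 ≤ H.ncard)
    (i1 i2 : ZMod n) (hne : c i1 ≠ c i2)
    (h1 : ∃ x ∈ H, G.Adj (c i1) x) (h2 : ∃ x ∈ H, G.Adj (c i2) x)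
    (hcard : 2 ≤ ({x | x ∈ H ∧ G.Adj (c i1) x} ∪ {x | x ∈ H ∧ G.Adj (c i2) x}).ncard) :
    ¬ G.Adj (c (i1 - 2)) (c (i2 - 2)) := by
  intro hadjE
  classical
  have h3n : 3 ≤ n := hc.1.1
  haveI : NeZero n := ⟨by omega⟩
  have hinj := hc.1.2.1
  have hadjc := hc.1.2.2
  have hoffH : ∀ x ∈ H, x ∉ Set.range c := fun x hx => Set.disjoint_left.mp hH.2.1 hx
  have hii : i1 ≠ i2 := fun h => hne (congrArg c h)
  -- choose a pair of distinct attachments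
  have pair : ∃ y1 y2, (y1 ∈ H ∧ G.Adj (c i1) y1) ∧ (y2 ∈ H ∧ G.Adj (c i2) y2) ∧ y1 ≠ y2 := by
    obtain ⟨y1, hy1H, hy1⟩ := h1
    obtain ⟨y2, hy2H, hy2⟩ := h2
    by_cases hyy : y1 = y2
    · subst hyy
      obtain ⟨a, b, ha, hb, hab⟩ := (Set.one_lt_ncard_iff (Set.toFinite ({x | x ∈ H ∧ G.Adj (c i1) x} ∪ {x | x ∈ H ∧ G.Adj (c i2) x}))).mp (by omega)
      simp only [Set.mem_union, Set.mem_setOf_eq] at ha hb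
      rcases eq_or_ne a y1 with rfl | hay
      · rcases hb with ⟨hbH, hbadj⟩ | ⟨hbH, hbadj⟩
        · exact ⟨b, a, ⟨hbH, hbadj⟩, ⟨hy2H, hy2⟩, hab.symm⟩
        · exact ⟨a, b, ⟨hy1H, hy1⟩, ⟨hbH, hbadj⟩, hab⟩
      · rcases ha with ⟨haH, haadj⟩ | ⟨haH, haadj⟩
        · exact ⟨a, y1, ⟨haH, haadj⟩, ⟨hy2H, hy2⟩, hay⟩
        · exact ⟨y1, a, ⟨hy1H, hy1⟩, ⟨haH, haadj⟩, Ne.symm hay⟩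
    · exact ⟨y1, y2, ⟨hy1H, hy1⟩, ⟨hy2H, hy2⟩, hyy⟩
  obtain ⟨x1, x2, ⟨hx1, ha1⟩, ⟨hx2, ha2⟩, hx12⟩ := pair
  have hx1c : x1 ∉ Set.range c := hoffH x1 hx1
  have hx2c : x2 ∉ Set.range c := hoffH x2 hx2
  set d := (i2 - i1).val with hdd
  have hdn : d < n := (i2 - i1).val_lt
  have hd0 : d ≠ 0 := by
    intro h
    have h2 : i2 - i1 = 0 := by
      have := (ZMod.val_eq_zero (i2 - i1)).mp h
      exact this
    exact hii (sub_eq_zero.mp h2).symm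
  have hvdsub : (i1 - i2).val = n - d := by
    have h2 : i1 - i2 = -(i2 - i1) := by ring
    rw [h2, ZMod.neg_val]
    simp only [hdd]
    rw [if_neg (fun h => hd0 (by rw [hdd, h, ZMod.val_zero]))]
  -- a path in H from x1 to x2
  obtain ⟨P, hP, Pnd, PH, Pch, Phead, Plast⟩ := exists_H_path hH.2.2.1 hx1 hx2
  have hPoff : ∀ x ∈ P, x ∉ Set.range c := fun x hx => hoffH x (PH x hx)
  have hP2 : 2 ≤ P.length := by
    match P, hP with
    | [a], _ =>
      simp only [List.head_cons, List.getLast_singleton] at Phead Plast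
      exact absurd (Phead.symm.trans Plast) hx12
    | a :: b :: l, _ => simp
  -- degenerate cases
  by_cases hdle : d ≤ 2
  · refine shortcut hc i1 i2 P hP Pnd hPoff Pch
      (by rw [Phead]; exact ha1) (by rw [Plast]; exact ha2.symm) ?_
    rw [hvdsub]; omega
  by_cases hdge : n - d ≤ 2
  · refine shortcut hc i2 i1 P.reverse (by simp [hP]) (List.nodup_reverse.mpr Pnd)
      (fun x hx => hPoff x (List.mem_reverse.mp hx)) (chain'_reverse_adj Pch)
      ?_ ?_ ?_
    · rw [List.head_reverse, Plast]; exact ha2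
    · rw [List.getLast_reverse, Phead]; exact ha1.symm
    · rw [List.length_reverse, ← hdd]; omega
  have hd3 : 3 ≤ d := by omega
  have hd3' : d ≤ n - 3 := by omega
  have hn6 : 6 ≤ n := by omega
  -- index conversions
  have e5 : i2 = i1 + ((d : ℕ) : ZMod n) := by
    rw [hdd, natCast_val_eq]; ring
  have e1 : i1 - 1 = i1 + ((n - 1 : ℕ) : ZMod n) := by
    have h2 : ((n-1 : ℕ) : ZMod n) = -1 := by
      push_cast [Nat.cast_sub (by omega : 1 ≤ n)]
      rw [ZMod.natCast_self]; ring
    rw [h2]; ring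
  have e2 : i1 - 2 = i1 + ((n - 2 : ℕ) : ZMod n) := by
    have h2 : ((n-2 : ℕ) : ZMod n) = -2 := by
      push_cast [Nat.cast_sub (by omega : 2 ≤ n)]
      rw [ZMod.natCast_self]; ring
    rw [h2]; ring
  have e3 : i2 - 1 = i1 + ((d - 1 : ℕ) : ZMod n) := by
    have h2 : ((d-1 : ℕ) : ZMod n) = ((d : ℕ) : ZMod n) - 1 := by
      push_cast [Nat.cast_sub (by omega : 1 ≤ d)]; ring
    rw [h2, e5]; ring
  have e4 : i2 - 2 = i1 + ((d - 2 : ℕ) : ZMod n) := by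
    have h2 : ((d-2 : ℕ) : ZMod n) = ((d : ℕ) : ZMod n) - 2 := by
      push_cast [Nat.cast_sub (by omega : 2 ≤ d)]; ring
    rw [h2, e5]; ring
  -- the exchanged cycle C'
  have hj' : List.Chain' G.Adj
      (c (i1 + ((d + (n - d - 1) - 1 : ℕ) : ZMod n)) ::
        (([] : List V) ++ [c (i1 + ((d - 1 - 1 : ℕ) : ZMod n))])) := by
    have g1 : (d + (n - d - 1) - 1 : ℕ) = n - 2 := by omega
    have g2 : (d - 1 - 1 : ℕ) = d - 2 := by omega
    rw [g1, g2, ← e2, ← e4, List.nil_append]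
    exact List.isChain_pair.mpr hadjE
  obtain ⟨m, f, hm, hcyc, hrange⟩ := masterCycle hinj hadjc i1 P [] d (n - d - 1) (d - 1) hP
    (by omega) (by omega) (by omega) (by omega) Pnd hPoff (by simp) (by simp)
    (by rw [Phead]; exact ha1) Pch (by rw [Plast, ← e5]; exact ha2.symm) hj'
  simp only [List.length_nil] at hm
  have hmn : m ≤ n := hc.2 m f hcyc
  have hPlen : P.length = 2 := by omega
  -- P = [x1, x2]
  obtain ⟨hxx, rfl⟩ : G.Adj x1 x2 ∧ P = [x1, x2] := by
    match P, hP, hPlen with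
    | [a, b], _, _ =>
      simp only [List.head_cons] at Phead
      have hb : b = x2 := by simpa using Plast
      subst Phead hb
      exact ⟨List.isChain_pair.mp Pch, rfl⟩
  have hmeq : m = n := by omega
  -- key facts, both orientations
  have K1 := key G hc hH i1 i2 x1 x2 hx1 hx2 ha1 ha2 hx12 hxx (by rw [← hdd]; omega)
    (by rw [← hdd]; omega)
  have K2 := key G hc hH i2 i1 x2 x1 hx2 hx1 ha2 ha1 hx12.symm hxx.symm
    (by rw [hvdsub]; omega) (by rw [hvdsub]; omega)
  obtain ⟨F1a, Aa, F5a, Ca⟩ := K1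
  obtain ⟨F1b, Ab, F5b, Cb⟩ := K2
  -- distinctness of the four special cycle vertices
  have idist : ∀ (s t : ℕ), s < n → t < n → s ≠ t → c (i1 + ((s:ℕ) : ZMod n)) ≠ c (i1 + ((t:ℕ) : ZMod n)) := by
    intro s t hs ht hst heq
    exact hst (inj_off hinj hs ht heq)
  -- cycle edges
  have ce1 : G.Adj (c (i1 - 2)) (c (i1 - 1)) := by
    have := hadjc (i1 - 2)
    rwa [show i1 - 2 + 1 = i1 - 1 by ring] at this
  have ce2 : G.Adj (c (i2 - 2)) (c (i2 - 1)) := by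
    have := hadjc (i2 - 2)
    rwa [show i2 - 2 + 1 = i2 - 1 by ring] at this
  -- distinctness of the four special vertices
  have nd12 : c (i1 - 1) ≠ c (i1 - 2) := by
    rw [e1, e2]; exact idist _ _ (by omega) (by omega) (by omega)
  have nd13 : c (i1 - 1) ≠ c (i2 - 2) := by
    rw [e1, e4]; exact idist _ _ (by omega) (by omega) (by omega)
  have nd14 : c (i1 - 1) ≠ c (i2 - 1) := by
    rw [e1, e3]; exact idist _ _ (by omega) (by omega) (by omega)
  have nd23 : c (i1 - 2) ≠ c (i2 - 2) := by
    rw [e2, e4]; exact idist _ _ (by omega) (by omega) (by omega)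
  have nd24 : c (i1 - 2) ≠ c (i2 - 1) := by
    rw [e2, e3]; exact idist _ _ (by omega) (by omega) (by omega)
  have nd34 : c (i2 - 2) ≠ c (i2 - 1) := by
    rw [e4, e3]; exact idist _ _ (by omega) (by omega) (by omega)
  by_cases hwex : ∃ w, w ∉ Set.range c ∧ (G.Adj w (c (i1 - 1)) ∨ G.Adj w (c (i2 - 1)))
  · -- an outside neighbour of a skipped vertex: build an induced P5
    obtain ⟨w, hwc, hcase⟩ := hwex
    have hwne : ∀ j : ZMod n, w ≠ c j := fun j h => hwc ⟨j, h.symm⟩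
    have hwa : w ≠ c (i1 - 1) := hwne _
    have hwb : w ≠ c (i1 - 2) := hwne _
    have hwcc : w ≠ c (i2 - 2) := hwne _
    have hwd : w ≠ c (i2 - 1) := hwne _
    rcases hcase with hw1 | hw2
    · obtain ⟨nw1, nw2, nw3, nw4⟩ := Ca w hwc hw1
      set p : ℕ → V := fun k => [w, c (i1-1), c (i1-2), c (i2-2), c (i2-1)].getD k w with hp
      refine hG ⟨p, ⟨⟨?_, ?_⟩, ?_⟩⟩
      · intro i j hi hj hij
        interval_cases i <;> interval_cases j <;>
          simp only [hp, List.getD_cons_zero, List.getD_cons_succ] at hij <;>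
          first
            | rfl
            | exact absurd hij (by assumption)
            | exact absurd hij.symm (by assumption)
      · intro i hi
        have hi' : i < 4 := by omega
        interval_cases i <;>
          simp only [hp, List.getD_cons_zero, List.getD_cons_succ] <;>
          first
            | exact hw1
            | exact ce1.symm
            | exact hadjE
            | exact ce2
      · intro i j hi hj hij
        interval_cases i <;> interval_cases j <;>
          first
            | omega
            | (simp only [hp, List.getD_cons_zero, List.getD_cons_succ] at hij
               first
                 | exact absurd rfl hij.ne
                 | exact absurd hij (by assumption)
                 | exact absurd hij.symm (by assumption)
                 | exact absurd hij Aa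
                 | exact absurd hij.symm Aa
                 | exact absurd hij F5a
                 | exact absurd hij.symm F5a
                 | exact absurd hij Ab
                 | exact absurd hij.symm Ab)
    · obtain ⟨nw1, nw2, nw3, nw4⟩ := Cb w hwc hw2
      set p : ℕ → V := fun k => [w, c (i2-1), c (i2-2), c (i1-2), c (i1-1)].getD k w with hp
      refine hG ⟨p, ⟨⟨?_, ?_⟩, ?_⟩⟩
      · intro i j hi hj hij
        interval_cases i <;> interval_cases j <;>
          simp only [hp, List.getD_cons_zero, List.getD_cons_succ] at hij <;>
          first
            | rfl
            | exact absurd hij (by assumption)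
            | exact absurd hij.symm (by assumption)
      · intro i hi
        have hi' : i < 4 := by omega
        interval_cases i <;>
          simp only [hp, List.getD_cons_zero, List.getD_cons_succ] <;>
          first
            | exact hw2
            | exact ce2.symm
            | exact hadjE.symm
            | exact ce1
      · intro i j hi hj hij
        interval_cases i <;> interval_cases j <;>
          first
            | omega
            | (simp only [hp, List.getD_cons_zero, List.getD_cons_succ] at hij
               first
                 | exact absurd rfl hij.ne
                 | exact absurd hij (by assumption)
                 | exact absurd hij.symm (by assumption)
                 | exact absurd hij Ab
                 | exact absurd hij.symm Ab
                 | exact absurd hij F5b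
                 | exact absurd hij.symm F5b
                 | exact absurd hij Aa
                 | exact absurd hij.symm Aa)
  · -- no outside neighbour: compare `μ` and `ω` for the exchanged cycle
    push_neg at hwex
    set R' := Set.range f with hR'
    have hR'mem : ∀ y, y ∈ R' ↔ y ∈ ([x1, x2] ++
        (oarc c i1 d (n - d - 1) ++ (([] : List V) ++ (oarc c i1 0 (d - 1)).reverse))) := by
      intro y
      rw [hrange]; rfl
    have hR'x1 : x1 ∈ R' := by rw [hR'mem]; simp
    have hR'x2 : x2 ∈ R' := by rw [hR'mem]; simp
    have hR'sub : ∀ y ∈ R', y = x1 ∨ y = x2 ∨ y ∈ Set.range c := by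
      intro y hy
      rw [hR'mem] at hy
      simp only [List.cons_append, List.nil_append, List.mem_cons, List.mem_append,
        List.mem_reverse] at hy
      rcases hy with rfl | rfl | h | h
      · exact Or.inl rfl
      · exact Or.inr (Or.inl rfl)
      · exact Or.inr (Or.inr (oarc_subset_range _ _ _ _ h))
      · exact Or.inr (Or.inr (oarc_subset_range _ _ _ _ h))
    have harcne : ∀ (j : ZMod n) (a : ℕ), a < n → c j = c (i1 + ((a : ℕ) : ZMod n)) →
        j = i1 + ((a : ℕ) : ZMod n) := fun j a _ h => hinj h
    have hv1m1 : c (i1 - 1) ∉ R' := by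
      intro hmem
      rcases hR'sub _ hmem with h | h | h
      · exact hx1c (h ▸ ⟨i1 - 1, rfl⟩)
      · exact hx2c (h ▸ ⟨i1 - 1, rfl⟩)
      rw [hR'mem] at hmem
      simp only [List.cons_append, List.nil_append, List.mem_cons, List.mem_append,
        List.mem_reverse] at hmem
      rcases hmem with heq | heq | hmm | hmm
      · exact hx1c (heq ▸ ⟨i1 - 1, rfl⟩)
      · exact hx2c (heq ▸ ⟨i1 - 1, rfl⟩)
      · obtain ⟨s, hs1, hs2, heq⟩ := mem_oarc.mp hmm
        rw [e1] at heq
        have := inj_off hinj (by omega : n - 1 < n) (by omega : s < n) heq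
        omega
      · obtain ⟨s, hs1, hs2, heq⟩ := mem_oarc.mp hmm
        rw [e1] at heq
        have := inj_off hinj (by omega : n - 1 < n) (by omega : s < n) heq
        omega
    have hv2m1 : c (i2 - 1) ∉ R' := by
      intro hmem
      rw [hR'mem] at hmem
      simp only [List.cons_append, List.nil_append, List.mem_cons, List.mem_append,
        List.mem_reverse] at hmem
      rcases hmem with heq | heq | hmm | hmm
      · exact hx1c (heq ▸ ⟨i2 - 1, rfl⟩)
      · exact hx2c (heq ▸ ⟨i2 - 1, rfl⟩)
      · obtain ⟨s, hs1, hs2, heq⟩ := mem_oarc.mp hmm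
        rw [e3] at heq
        have := inj_off hinj (by omega : d - 1 < n) (by omega : s < n) heq
        omega
      · obtain ⟨s, hs1, hs2, heq⟩ := mem_oarc.mp hmm
        rw [e3] at heq
        have := inj_off hinj (by omega : d - 1 < n) (by omega : s < n) heq
        omega
    have hcov : ∀ j : ZMod n, c j ≠ c (i1 - 1) → c j ≠ c (i2 - 1) → c j ∈ R' := by
      intro j hj1 hj2
      have hjrep : j = i1 + (((j - i1).val : ℕ) : ZMod n) := by
        rw [natCast_val_eq]; ring
      set a := (j - i1).val with ha
      have han : a < n := (j - i1).val_lt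
      have ha1 : a ≠ n - 1 := by
        intro h
        exact hj1 (by rw [hjrep, h, ← e1])
      have ha2 : a ≠ d - 1 := by
        intro h
        exact hj2 (by rw [hjrep, h, ← e3])
      rw [hR'mem]
      simp only [List.cons_append, List.nil_append, List.mem_cons, List.mem_append,
        List.mem_reverse]
      by_cases hsmall : a ≤ d - 2
      · refine Or.inr (Or.inr (Or.inr (mem_oarc.mpr ⟨a, by omega, by omega, by rw [hjrep]⟩)))
      · refine Or.inr (Or.inr (Or.inl (mem_oarc.mpr ⟨a, by omega, by omega, by rw [hjrep]⟩)))
    -- classification of components of `G - R'`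
    have hbdd : BddAbove {k | ∃ S : Set V, IsCompOff G (Set.range c) S ∧ S.ncard = k} := by
      refine ⟨Fintype.card V, ?_⟩
      rintro k ⟨S, -, rfl⟩
      have := Set.ncard_le_ncard (Set.subset_univ S) (Set.toFinite _)
      simpa [Set.ncard_univ] using this
    have hclass : ∀ S, IsCompOff G R' S →
        S.ncard ≤ H.ncard ∧ (S.ncard = H.ncard → IsCompOff G (Set.range c) S ∧ S ≠ H) := by
      intro S hS
      obtain ⟨hSne, hSdisj, hSconn, hSclose⟩ := hS
      by_cases h1m : c (i1 - 1) ∈ S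
      · have hsingle : ∀ v ∈ S, v = c (i1 - 1) := by
          refine reach_closed hSconn (· = c (i1 - 1)) h1m rfl ?_
          intro x y hxS hyS hPx hxy
          subst hPx
          exfalso
          by_cases hyc : y ∈ Set.range c
          · obtain ⟨j, rfl⟩ := hyc
            have hy1 : c j ≠ c (i1 - 1) := hxy.ne'
            by_cases hy2 : c j = c (i2 - 1)
            · exact F5a (hy2 ▸ hxy)
            · exact (Set.disjoint_left.mp hSdisj hyS) (hcov j hy1 hy2)
          · exact (hwex y hyc).1 hxy.symm
        have hSeq : S = {c (i1 - 1)} := by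
          apply Set.eq_singleton_iff_unique_mem.mpr ⟨h1m, hsingle⟩
        rw [hSeq, Set.ncard_singleton]
        exact ⟨by omega, by omega⟩
      by_cases h2m : c (i2 - 1) ∈ S
      · have hsingle : ∀ v ∈ S, v = c (i2 - 1) := by
          refine reach_closed hSconn (· = c (i2 - 1)) h2m rfl ?_
          intro x y hxS hyS hPx hxy
          subst hPx
          exfalso
          by_cases hyc : y ∈ Set.range c
          · obtain ⟨j, rfl⟩ := hyc
            have hy2 : c j ≠ c (i2 - 1) := hxy.ne'
            by_cases hy1 : c j = c (i1 - 1)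
            · exact F5b (hy1 ▸ hxy)
            · exact (Set.disjoint_left.mp hSdisj hyS) (hcov j hy1 hy2)
          · exact (hwex y hyc).2 hxy.symm
        have hSeq : S = {c (i2 - 1)} := by
          apply Set.eq_singleton_iff_unique_mem.mpr ⟨h2m, hsingle⟩
        rw [hSeq, Set.ncard_singleton]
        exact ⟨by omega, by omega⟩
      have hSoffc : ∀ v ∈ S, v ∉ Set.range c := by
        rintro v hv ⟨j, rfl⟩
        have hv1 : c j ≠ c (i1 - 1) := fun h => h1m (h ▸ hv)
        have hv2 : c j ≠ c (i2 - 1) := fun h => h2m (h ▸ hv)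
        exact (Set.disjoint_left.mp hSdisj hv) (hcov j hv1 hv2)
      by_cases hSH : ∃ u, u ∈ S ∧ u ∈ H
      · obtain ⟨u, huS, huH⟩ := hSH
        have hSsubH : ∀ v ∈ S, v ∈ H := by
          refine reach_closed hSconn (· ∈ H) huS huH ?_
          intro x y hxS hyS hPx hxy
          by_contra hyH
          exact hH.2.2.2 x y hPx hyH (hSoffc y hyS) hxy
        have hx1S : x1 ∉ S := fun h => (Set.disjoint_left.mp hSdisj h) hR'x1
        have hss : S ⊂ H := ⟨fun v hv => hSsubH v hv, fun hHS => hx1S (hHS hx1)⟩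
        have := Set.ncard_lt_ncard hss (Set.toFinite H)
        exact ⟨by omega, by omega⟩
      · push_neg at hSH
        have hIC : IsCompOff G (Set.range c) S := by
          refine ⟨hSne, Set.disjoint_left.mpr hSoffc, hSconn, ?_⟩
          intro u v huS hvS hvc
          by_cases hvR' : v ∈ R'
          · have hvH : v ∈ H := by
              rcases hR'sub v hvR' with rfl | rfl | h
              · exact hx1
              · exact hx2
              · exact absurd h hvc
            intro hadj'
            exact hH.2.2.2 v u hvH (fun h => hSH u huS h) (hSoffc u huS) hadj'.symm
          · exact hSclose u v huS hvS hvR'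
        have hle : S.ncard ≤ H.ncard := by
          rw [hHmu]
          exact le_csSup hbdd ⟨S, hIC, rfl⟩
        refine ⟨hle, fun heq => ⟨hIC, ?_⟩⟩
        intro hSeq
        obtain ⟨u, huS⟩ := hSne
        exact hSH u huS (hSeq ▸ huS)
    -- the singleton component {v1-1}
    have hcomp1 : IsCompOff G R' {c (i1 - 1)} := by
      refine ⟨⟨c (i1 - 1), rfl⟩, ?_, ?_, ?_⟩
      · rw [Set.disjoint_left]
        rintro y rfl
        exact hv1m1
      · rw [SimpleGraph.connected_iff]
        constructor
        · intro a b
          have : a = b := Subtype.ext (a.2.trans b.2.symm)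
          exact this ▸ Reachable.refl _
        · exact ⟨⟨c (i1 - 1), rfl⟩⟩
      · rintro u v rfl hvS hvR' hadj'
        by_cases hvc : v ∈ Set.range c
        · obtain ⟨j, rfl⟩ := hvc
          have hv1 : c j ≠ c (i1 - 1) := fun h => hvS h
          by_cases hv2 : c j = c (i2 - 1)
          · exact F5a (hv2 ▸ hadj')
          · exact hvR' (hcov j hv1 hv2)
        · exact (hwex v hvc).1 hadj'.symm
    -- μ comparison
    have hlong : IsLongestCycle G m f := ⟨hcyc, fun m' d' h' => le_trans (hc.2 m' d' h') (by omega)⟩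
    have hmin1 := (hmin m f hlong).1
    have hmuR'le : muC G R' ≤ H.ncard := by
      have hne' : {k | ∃ S : Set V, IsCompOff G R' S ∧ S.ncard = k}.Nonempty :=
        ⟨1, {c (i1 - 1)}, hcomp1, Set.ncard_singleton _⟩
      refine csSup_le hne' ?_
      rintro k ⟨S, hS, rfl⟩
      exact (hclass S hS).1
    have hmueq : muC G (Set.range c) = muC G R' := by
      rw [hR'] at *
      have : muC G (Set.range c) ≤ muC G (Set.range f) := hmin1
      omega
    have hmin2 := (hmin m f hlong).2 hmueq
    -- ω comparison
    have hAB : {S : Set V | IsCompOff G R' S ∧ S.ncard = muC G R'} ⊆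
        {S : Set V | IsCompOff G (Set.range c) S ∧ S.ncard = muC G (Set.range c)} \ {H} := by
      rintro S ⟨hS, hSn⟩
      have heq : S.ncard = H.ncard := by rw [hSn, ← hmueq, ← hHmu]
      obtain ⟨hic, hne'⟩ := (hclass S hS).2 heq
      exact ⟨⟨hic, by rw [heq, hHmu]⟩, by simpa using hne'⟩
    have hHB : H ∈ {S : Set V | IsCompOff G (Set.range c) S ∧ S.ncard = muC G (Set.range c)} :=
      ⟨hH, hHmu⟩
    have hlt : omegaC G R' < omegaC G (Set.range c) := by
      calc omegaC G R' ≤ ({S : Set V | IsCompOff G (Set.range c) S ∧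
            S.ncard = muC G (Set.range c)} \ {H}).ncard :=
              Set.ncard_le_ncard hAB (Set.toFinite _)
        _ < omegaC G (Set.range c) :=
              Set.ncard_diff_singleton_lt_of_mem hHB (Set.toFinite _)
    rw [hR'] at hlt
    omega
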